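/- Every formula φ of the basic epistemic language is valid on the class of all multi-agent belief models satisfying belief correctness if and only if φ is valid on the class of all multi-relational Kripke models whose accessibility relations are all reflexive. -/
import Mathlib



/-- Explicit-belief language L₀ over atoms ℕ and agents `Fin n`. -/
inductive Form0 (n : ℕ) : Type
  | atom : ℕ → Form0 n
  | neg : Form0 n → Form0 n
  | conj : Form0 n → Form0 n → Form0 n
  | tri : Fin n → Form0 n → Form0 n

/-- Multi-agent belief base. -/
structure MBB (n : ℕ) where
  base : Fin n → Set (Form0 n)
  state : Set ℕ

/-- Satisfaction of L₀-formulas at an MBB. -/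
def sat0 {n : ℕ} (B : MBB n) : Form0 n → Prop
  | .atom p => p ∈ B.state
  | .neg a => ¬ sat0 B a
  | .conj a b => sat0 B a ∧ sat0 B b
  | .tri i a => a ∈ B.base i

/-- A correct MBB: every explicit belief is true at it. -/
def MBB.Correct {n : ℕ} (B : MBB n) : Prop := ∀ i : Fin n, ∀ a ∈ B.base i, sat0 B a

/-- Epistemic alternative relation: B Rᵢ B' iff B' satisfies everything in agent i's base at B. -/
def EpiAlt {n : ℕ} (i : Fin n) (B B' : MBB n) : Prop := ∀ a ∈ B.base i, sat0 B' a

/-- Belief correctness of an MBM (B, C). -/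
def BC {n : ℕ} (B : MBB n) (C : Set (MBB n)) : Prop :=
  B ∈ C ∧ ∀ B' ∈ C, ∀ i : Fin n, EpiAlt i B' B'

/-- Basic epistemic language L_EL. -/
inductive FormEL (n : ℕ) : Type
  | atom : ℕ → FormEL n
  | neg : FormEL n → FormEL n
  | conj : FormEL n → FormEL n → FormEL n
  | box : Fin n → FormEL n → FormEL n

/-- Satisfaction of L_EL at an MBM (B, C). -/
def satEL {n : ℕ} (C : Set (MBB n)) (B : MBB n) : FormEL n → Prop
  | .atom p => p ∈ B.state
  | .neg a => ¬ satEL C B a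
  | .conj a b => satEL C B a ∧ satEL C B b
  | .box i a => ∀ B' ∈ C, EpiAlt i B B' → satEL C B' a

/-- Multi-relational Kripke model. -/
structure Kripke (n : ℕ) where
  W : Type
  rel : Fin n → W → W → Prop
  val : ℕ → W → Prop

/-- Kripke satisfaction for L_EL. -/
def satK {n : ℕ} (M : Kripke n) (w : M.W) : FormEL n → Prop
  | .atom p => M.val p w
  | .neg a => ¬ satK M w a
  | .conj a b => satK M w a ∧ satK M w b
  | .box i a => ∀ v, M.rel i w v → satK M v a


/-- Translation L₀ → L_EL. -/
def tr {n : ℕ} : Form0 n → FormEL n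
  | .atom p => .atom p
  | .neg a => .neg (tr a)
  | .conj a b => .conj (tr a) (tr b)
  | .tri i a => .box i (tr a)

/-- Translation L_EL → L₀. -/
def tr' {n : ℕ} : FormEL n → Form0 n
  | .atom p => .atom p
  | .neg a => .neg (tr' a)
  | .conj a b => .conj (tr' a) (tr' b)
  | .box i a => .tri i (tr' a)

lemma tr_tr' {n : ℕ} (ψ : FormEL n) : tr (tr' ψ) = ψ := by
  induction ψ <;> simp [tr, tr', *]

/-- Encode a Kripke world as an MBB. -/
def enc {n : ℕ} (M : Kripke n) (w : M.W) : MBB n :=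
  ⟨fun i => {a | satK M w (.box i (tr a))}, {p | M.val p w}⟩

lemma sat0_enc {n : ℕ} (M : Kripke n) (a : Form0 n) :
    ∀ w, sat0 (enc M w) a ↔ satK M w (tr a) := by
  induction a with
  | atom p => intro w; rfl
  | neg a ih => intro w; simp [sat0, tr, satK, ih]
  | conj a b iha ihb => intro w; simp [sat0, tr, satK, iha, ihb]
  | tri i a ih => intro w; rfl

lemma satEL_enc {n : ℕ} (M : Kripke n) (hrefl : ∀ (i : Fin n) (w : M.W), M.rel i w w)
    (ψ : FormEL n) : ∀ w, satEL (Set.range (enc M)) (enc M w) ψ ↔ satK M w ψ := by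
  induction ψ with
  | atom p => intro w; rfl
  | neg a ih => intro w; simp [satEL, satK, ih]
  | conj a b iha ihb => intro w; simp [satEL, satK, iha, ihb]
  | box i a ih =>
    intro w
    constructor
    · intro h v hv
      rw [← ih v]
      refine h _ ⟨v, rfl⟩ ?_
      intro b hb
      rw [sat0_enc]
      exact hb v hv
    · rintro h B' ⟨v, rfl⟩ hE
      rw [ih v]
      have : sat0 (enc M v) (tr' a) := by
        apply hE
        show satK M w (.box i (tr (tr' a)))
        rw [tr_tr']
        exact h
      rw [sat0_enc, tr_tr'] at this
      exact this

/-- Kripke model from an MBM. -/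
def kOf {n : ℕ} (C : Set (MBB n)) : Kripke n :=
  ⟨{B // B ∈ C}, fun i B B' => EpiAlt i B.1 B'.1, fun p B => p ∈ B.1.state⟩

lemma satK_kOf {n : ℕ} (C : Set (MBB n)) (ψ : FormEL n) :
    ∀ B : {B // B ∈ C}, satK (kOf C) B ψ ↔ satEL C B.1 ψ := by
  induction ψ with
  | atom p => intro B; rfl
  | neg a ih => intro B; simp [satK, satEL, ih]
  | conj a b iha ihb => intro B; simp [satK, satEL, iha, ihb]
  | box i a ih =>
    intro B
    constructor
    · intro h B' hB' hE
      rw [← ih ⟨B', hB'⟩]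
      exact h ⟨B', hB'⟩ hE
    · intro h B' hE
      rw [ih B']
      exact h B'.1 B'.2 hE

/-- validity on belief-correct MBMs coincides with validity on reflexive Kripke
models. -/
theorem stmt4 (n : ℕ) (φ : FormEL n) :
    (∀ (B : MBB n) (C : Set (MBB n)), BC B C → satEL C B φ) ↔
      (∀ M : Kripke n, (∀ (i : Fin n) (w : M.W), M.rel i w w) → ∀ w : M.W, satK M w φ) := by
  constructor
  · intro h M hrefl w
    rw [← satEL_enc M hrefl φ w]
    apply h
    refine ⟨⟨w, rfl⟩, ?_⟩
    rintro B' ⟨v, rfl⟩ i a ha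
    rw [sat0_enc]
    exact ha v (hrefl i v)
  · intro h B C hBC
    rw [← satK_kOf C φ ⟨B, hBC.1⟩]
    apply h
    intro i ⟨B', hB'⟩
    exact hBC.2 B' hB' i
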